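/- (Solving the projected Laplacian system.) Let L be an invertible real n×n matrix, let v ∈ ℝⁿ be a unit vector, and set P = I_n − v vᵀ. Let v̄ = L⁻¹ v and suppose vᵀ v̄ ≠ 0. Then for every u ∈ ℝⁿ, the vector w = (I_n − (v̄ vᵀ)/(vᵀ v̄)) L⁻¹ u satisfies P w = w and P L P w = P u. (Thus w solves the grounded system P L P x = P u within the range of the projection P.) -/

import Mathlib

open Matrix

lemma vecMulVec_mulVec_aux {n : ℕ} (a b x : Fin n → ℝ) :
    (Matrix.vecMulVec a b).mulVec x = (b ⬝ᵥ x) • a := by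
  ext i
  simp [Matrix.mulVec, dotProduct, Matrix.vecMulVec_apply, Finset.sum_mul,
    mul_assoc, mul_comm, Finset.mul_sum, mul_left_comm]

/-- (Solving the projected Laplacian system.) For invertible `L`, unit vector `v`,
`P = I − v vᵀ`, `v̄ = L⁻¹ v` with `vᵀ v̄ ≠ 0`, the vector
`w = (I − v̄ vᵀ / (vᵀ v̄)) L⁻¹ u` satisfies `P w = w` and `P L P w = P u`. -/
theorem stmt_5 {n : ℕ}
    (L : Matrix (Fin n) (Fin n) ℝ) (hL : IsUnit L.det)
    (v : Fin n → ℝ) (hv : v ⬝ᵥ v = 1)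
    (P : Matrix (Fin n) (Fin n) ℝ) (hP : P = 1 - Matrix.vecMulVec v v)
    (vbar : Fin n → ℝ) (hvbar : vbar = L⁻¹.mulVec v)
    (hne : v ⬝ᵥ vbar ≠ 0)
    (u : Fin n → ℝ)
    (w : Fin n → ℝ)
    (hw : w = ((1 : Matrix (Fin n) (Fin n) ℝ) -
      (v ⬝ᵥ vbar)⁻¹ • Matrix.vecMulVec vbar v).mulVec (L⁻¹.mulVec u)) :
    P.mulVec w = w ∧ (P * L * P).mulVec w = P.mulVec u := by
  set y := L⁻¹.mulVec u with hy
  have hw' : w = y - ((v ⬝ᵥ vbar)⁻¹ * (v ⬝ᵥ y)) • vbar := by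
    rw [hw, Matrix.sub_mulVec, Matrix.one_mulVec, Matrix.smul_mulVec,
      vecMulVec_mulVec_aux, smul_smul]
  have hvw : v ⬝ᵥ w = 0 := by
    rw [hw']
    rw [dotProduct_sub, dotProduct_smul]
    field_simp
    rw [smul_eq_mul, div_mul_cancel₀ _ hne, sub_self]
  have hPw : P.mulVec w = w := by
    rw [hP, Matrix.sub_mulVec, Matrix.one_mulVec, vecMulVec_mulVec_aux, hvw]
    simp
  refine ⟨hPw, ?_⟩
  have hLvbar : L.mulVec vbar = v := by
    rw [hvbar, Matrix.mulVec_mulVec, Matrix.mul_nonsing_inv L hL, Matrix.one_mulVec]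
  have hLy : L.mulVec y = u := by
    rw [hy, Matrix.mulVec_mulVec, Matrix.mul_nonsing_inv L hL, Matrix.one_mulVec]
  have hPv : P.mulVec v = 0 := by
    rw [hP, Matrix.sub_mulVec, Matrix.one_mulVec, vecMulVec_mulVec_aux, hv, one_smul, sub_self]
  rw [Matrix.mul_assoc, ← Matrix.mulVec_mulVec, ← Matrix.mulVec_mulVec, hPw,
    Matrix.mulVec_mulVec, ← Matrix.mulVec_mulVec, hw', Matrix.mulVec_sub,
    Matrix.mulVec_smul, hLvbar, hLy, Matrix.mulVec_sub, Matrix.mulVec_smul, hPv]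
  simp
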